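/- arXiv:1912.01104 — 3 statements merged into one kernel-verified Lean document; each statement's English description precedes it below -/
import Mathlib

section
/- Let n > 2 and m > 2 be integers. Then the ring 𝕋ₙ(𝔽₂) of n×n upper triangular matrices over 𝔽₂ is m-torsion clean if and only if both of the following hold: (1) n ≤ k₁(m), and (2) n > k₁(u) for every integer u with 2 < u ≤ m − 1 (equivalently, 𝕋ₙ(𝔽₂) is not almost u-torsion clean for any u < m). -/
def AlmostTorsionClean (R : Type*) [Ring R] (m : ℕ) : Prop :=
  ∀ r : R, ∃ u e : R, IsUnit u ∧ u ^ m = 1 ∧ e * e = e ∧ r = u + e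

def TorsionClean (R : Type*) [Ring R] (m : ℕ) : Prop :=
  AlmostTorsionClean R m ∧ ∀ k : ℕ, 0 < k → k < m → ¬ AlmostTorsionClean R k

/-- The ring of n×n upper triangular matrices over 𝔽₂, as a subring of the full matrix ring. -/
def Triangular (n : ℕ) : Subring (Matrix (Fin n) (Fin n) (ZMod 2)) where
  carrier := {A | A.BlockTriangular id}
  zero_mem' := Matrix.blockTriangular_zero
  one_mem' := Matrix.blockTriangular_one
  add_mem' := fun ha hb => ha.add hb
  neg_mem' := fun ha => ha.neg
  mul_mem' := fun ha hb => ha.mul hb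

/-- `k1 m` is the smallest `k` with `1 ≤ k ≤ m` such that `C(m, k)` is odd. -/
noncomputable def k1 (m : ℕ) : ℕ := sInf {k | 1 ≤ k ∧ k ≤ m ∧ Odd (m.choose k)}

section Aux

open Matrix Finset

variable {n m : ℕ}

/-- diagonal entry of a product of upper triangular matrices -/
lemma TC_diag_mul {A B : Matrix (Fin n) (Fin n) (ZMod 2)}
    (hA : A.BlockTriangular id) (hB : B.BlockTriangular id) (i : Fin n) :
    (A * B) i i = A i i * B i i := by
  rw [Matrix.mul_apply]
  refine Finset.sum_eq_single i (fun j _ hj => ?_) (fun h => absurd (Finset.mem_univ i) h)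
  rcases lt_or_gt_of_ne hj with h | h
  · rw [hA (show (id : Fin n → Fin n) j < id i from h), zero_mul]
  · rw [hB (show (id : Fin n → Fin n) i < id j from h), mul_zero]

/-- powers of a strictly upper triangular matrix -/
lemma TC_strict_pow {N : Matrix (Fin n) (Fin n) (ZMod 2)}
    (hN : ∀ i j : Fin n, (j : ℕ) ≤ (i : ℕ) → N i j = 0) :
    ∀ k (i j : Fin n), (j : ℕ) < (i : ℕ) + k → (N ^ k) i j = 0 := by
  intro k
  induction k with
  | zero =>
    intro i j h
    have hij : i ≠ j := fun hij => by omega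
    rw [pow_zero, Matrix.one_apply_ne hij]
  | succ k ih =>
    intro i j h
    rw [pow_succ', Matrix.mul_apply]
    apply Finset.sum_eq_zero
    intro l _
    rcases le_or_gt (l : ℕ) (i : ℕ) with hl | hl
    · rw [hN i l hl, zero_mul]
    · rw [ih l j (by omega), mul_zero]

lemma TC_strict_pow_n {N : Matrix (Fin n) (Fin n) (ZMod 2)}
    (hN : ∀ i j : Fin n, (j : ℕ) ≤ (i : ℕ) → N i j = 0) : N ^ n = 0 := by
  ext i j
  rw [TC_strict_pow hN n i j (by omega)]
  rfl

/-- binomial expansion of `(1 + N)^m` over `ZMod 2` matrices -/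
lemma TC_one_add_pow (N : Matrix (Fin n) (Fin n) (ZMod 2)) (m : ℕ) :
    (1 + N) ^ m = ∑ k ∈ Finset.range (m + 1), (m.choose k : ZMod 2) • N ^ k := by
  rw [add_comm, (Commute.one_right N).add_pow]
  refine Finset.sum_congr rfl fun k _ => ?_
  rw [one_pow, mul_one, ← (Nat.cast_commute (m.choose k) (N ^ k)).eq,
    ← nsmul_eq_mul, ← Nat.cast_smul_eq_nsmul (ZMod 2)]

/-- the Jordan-block nilpotent matrix -/
def TC_J (n : ℕ) : Matrix (Fin n) (Fin n) (ZMod 2) :=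
  Matrix.of fun i j => if (j : ℕ) = (i : ℕ) + 1 then 1 else 0

lemma TC_J_tri : (TC_J n).BlockTriangular id := by
  intro i j h
  simp only [TC_J, Matrix.of_apply]
  have : (j : ℕ) ≠ (i : ℕ) + 1 := by
    simp only [id] at h
    omega
  simp [this]

lemma TC_J_pow (k : ℕ) (i j : Fin n) :
    ((TC_J n) ^ k) i j = if (j : ℕ) = (i : ℕ) + k then 1 else 0 := by
  induction k generalizing i j with
  | zero =>
    rw [pow_zero, Matrix.one_apply]
    by_cases h : i = j
    · subst h; simp
    · have h2 : ¬ ((j : ℕ) = (i : ℕ) + 0) := fun hc => h (Fin.ext (by omega))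
      rw [if_neg h, if_neg h2]
  | succ k ih =>
    rw [pow_succ', Matrix.mul_apply]
    rcases lt_or_ge ((i : ℕ) + 1) n with h | h
    · have key : ∀ l : Fin n, TC_J n i l * ((TC_J n) ^ k) l j
          = if l = ⟨(i : ℕ) + 1, h⟩ then (if (j : ℕ) = (i : ℕ) + (k + 1) then 1 else 0) else 0 := by
        intro l
        rw [ih]
        by_cases hl : l = ⟨(i : ℕ) + 1, h⟩
        · subst hl
          rw [if_pos rfl]
          have h1 : TC_J n i ⟨(i : ℕ) + 1, h⟩ = 1 := by
            simp [TC_J]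
          rw [h1, one_mul,
            show ((⟨(i : ℕ) + 1, h⟩ : Fin n) : ℕ) + k = (i : ℕ) + (k + 1) from by
              simp; omega]
        · have h2 : (l : ℕ) ≠ (i : ℕ) + 1 := fun hc => hl (Fin.ext hc)
          have h3 : TC_J n i l = 0 := by simp [TC_J, h2]
          rw [h3, zero_mul, if_neg hl]
      rw [Finset.sum_congr rfl fun l _ => key l, Finset.sum_ite_eq' _ _ _,
        if_pos (Finset.mem_univ _)]
    · have hz : ∀ l : Fin n, TC_J n i l * ((TC_J n) ^ k) l j = 0 := by
        intro l
        have : (l : ℕ) ≠ (i : ℕ) + 1 := by omega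
        simp [TC_J, this]
      rw [Finset.sum_congr rfl fun l _ => hz l, Finset.sum_const_zero]
      have : (j : ℕ) ≠ (i : ℕ) + (k + 1) := by omega
      simp [this]

lemma TC_idem_pow {R : Type*} [Monoid R] {e : R} (he : e * e = e) :
    ∀ k, e ^ (k + 1) = e := by
  intro k
  induction k with
  | zero => rw [pow_one]
  | succ k ih => rw [pow_succ, ih, he]

lemma TC_k1_mem (hm : 0 < m) :
    1 ≤ k1 m ∧ k1 m ≤ m ∧ Odd (m.choose (k1 m)) :=
  Nat.sInf_mem (⟨m, hm, le_refl m, by simp [Nat.choose_self]⟩ :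
    {k | 1 ≤ k ∧ k ≤ m ∧ Odd (m.choose k)}.Nonempty)

lemma TC_choose_even {k : ℕ} (hm : 0 < m) (hk1 : 1 ≤ k) (hk : k < k1 m) (hkm : k ≤ m) :
    (m.choose k : ZMod 2) = 0 := by
  have hnot : k ∉ {k | 1 ≤ k ∧ k ≤ m ∧ Odd (m.choose k)} := Nat.notMem_of_lt_sInf hk
  have : ¬ Odd (m.choose k) := fun ho => hnot ⟨hk1, hkm, ho⟩
  rw [Nat.not_odd_iff_even] at this
  exact (ZMod.natCast_eq_zero_iff _ 2).mpr this.two_dvd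

/-- Main lemma, reverse direction: if `n ≤ k1 m` then `Triangular n` is almost m-torsion clean -/
lemma TC_almost_of_le (hle : n ≤ k1 m) (hm : 0 < m) :
    AlmostTorsionClean (Triangular n) m := by
  intro r
  have hd : (Matrix.diagonal fun i => 1 + (r : Matrix (Fin n) (Fin n) (ZMod 2)) i i).BlockTriangular
      (id : Fin n → Fin n) := Matrix.blockTriangular_diagonal _
  set e : Triangular n := ⟨Matrix.diagonal fun i => 1 + (r : Matrix (Fin n) (Fin n) (ZMod 2)) i i, hd⟩
    with he_def
  set u : Triangular n := r - e with hu_def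
  -- the nilpotent part
  set N : Triangular n := u - 1 with hN_def
  have hNval : ∀ i j : Fin n, (j : ℕ) ≤ (i : ℕ) →
      (N : Matrix (Fin n) (Fin n) (ZMod 2)) i j = 0 := by
    intro i j hji
    have : (N : Matrix (Fin n) (Fin n) (ZMod 2)) i j =
        (r : Matrix (Fin n) (Fin n) (ZMod 2)) i j
          - (e : Matrix (Fin n) (Fin n) (ZMod 2)) i j
          - (1 : Matrix (Fin n) (Fin n) (ZMod 2)) i j := by
      rw [hN_def, hu_def]
      push_cast
      simp [Matrix.sub_apply]
    have hecoe : (e : Matrix (Fin n) (Fin n) (ZMod 2)) =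
        Matrix.diagonal fun i => 1 + (r : Matrix (Fin n) (Fin n) (ZMod 2)) i i := rfl
    rw [this, hecoe]
    rcases eq_or_lt_of_le hji with hj | hj
    · have hij : i = j := Fin.ext hj.symm
      subst hij
      simp only [Matrix.diagonal_apply_eq, Matrix.one_apply_eq]
      generalize (r : Matrix (Fin n) (Fin n) (ZMod 2)) i i = a
      revert a; decide
    · have hij : j ≠ i := fun hc => by omega
      rw [r.2 (show (id : Fin n → Fin n) j < id i from hj),
        Matrix.diagonal_apply_ne' _ hij, Matrix.one_apply_ne' hij]
      ring
  have hNn : (N : Matrix (Fin n) (Fin n) (ZMod 2)) ^ n = 0 := TC_strict_pow_n hNval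
  have hNnil : IsNilpotent N := ⟨n, by
    apply Subtype.ext
    push_cast
    exact hNn⟩
  have huN : u = 1 + N := by rw [hN_def]; abel
  refine ⟨u, e, ?_, ?_, ?_, ?_⟩
  · rw [huN]; exact hNnil.isUnit_one_add
  · -- u ^ m = 1
    apply Subtype.ext
    have : ((u ^ m : Triangular n) : Matrix (Fin n) (Fin n) (ZMod 2)) =
        (1 + (N : Matrix (Fin n) (Fin n) (ZMod 2))) ^ m := by
      rw [huN]; push_cast; ring_nf
    rw [this, TC_one_add_pow]
    rw [Finset.sum_eq_single 0]
    · simp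
    · intro k hk hk0
      rcases lt_or_ge k n with h | h
      · rw [TC_choose_even hm (Nat.one_le_iff_ne_zero.mpr hk0) (lt_of_lt_of_le h hle)
          (Nat.lt_succ_iff.mp (Finset.mem_range.mp hk)), zero_smul]
      · rw [pow_eq_zero_of_le h hNn, smul_zero]
    · intro h
      exact absurd (Finset.mem_range.mpr (Nat.succ_pos m)) h
  · -- e is idempotent
    apply Subtype.ext
    push_cast
    show Matrix.diagonal _ * Matrix.diagonal _ = Matrix.diagonal _
    simp only [Matrix.diagonal_mul_diagonal]
    have hfun : ∀ a : ZMod 2, (1 + a) * (1 + a) = 1 + a := by decide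
    exact congrArg Matrix.diagonal (funext fun i => hfun _)
  · rw [hu_def]; abel

/-- Main lemma, forward direction -/
lemma TC_le_of_almost (h : AlmostTorsionClean (Triangular n) m) (hm : 0 < m) :
    n ≤ k1 m := by
  by_contra hlt
  push_neg at hlt
  obtain ⟨hk01, hk0m, hodd⟩ := TC_k1_mem hm
  set k0 := k1 m with hk0_def
  have hrtri : (1 + TC_J n).BlockTriangular (id : Fin n → Fin n) :=
    Matrix.blockTriangular_one.add TC_J_tri
  obtain ⟨u, e, hu, hum, he, hre⟩ := h ⟨1 + TC_J n, hrtri⟩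
  -- the diagonal of u is all ones
  have hudiag : ∀ i : Fin n, (u : Matrix (Fin n) (Fin n) (ZMod 2)) i i = 1 := by
    intro i
    have h1 : u * u ^ (m - 1) = 1 := by
      rw [← pow_succ' u (m - 1), Nat.sub_add_cancel hm, hum]
    have h2 : (u : Matrix (Fin n) (Fin n) (ZMod 2)) *
        ((u ^ (m - 1) : Triangular n) : Matrix (Fin n) (Fin n) (ZMod 2)) = 1 := by
      rw [show (u : Matrix (Fin n) (Fin n) (ZMod 2)) *
          ((u ^ (m - 1) : Triangular n) : Matrix (Fin n) (Fin n) (ZMod 2)) =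
          ((u * u ^ (m - 1) : Triangular n) : Matrix (Fin n) (Fin n) (ZMod 2)) by push_cast; rfl,
        h1]
      rfl
    have h3 := TC_diag_mul u.2 (u ^ (m - 1)).2 i
    rw [h2, Matrix.one_apply_eq] at h3
    have : ∀ a b : ZMod 2, 1 = a * b → a = 1 := by decide
    exact this _ _ h3
  -- diagonal of e is zero
  have hediag : ∀ i : Fin n, (e : Matrix (Fin n) (Fin n) (ZMod 2)) i i = 0 := by
    intro i
    have h1 : ((⟨1 + TC_J n, hrtri⟩ : Triangular n) : Matrix (Fin n) (Fin n) (ZMod 2)) i i =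
        (u : Matrix (Fin n) (Fin n) (ZMod 2)) i i +
        (e : Matrix (Fin n) (Fin n) (ZMod 2)) i i := by
      rw [hre]; push_cast; simp [Matrix.add_apply]
    have hJ : TC_J n i i = 0 := by
      simp only [TC_J, Matrix.of_apply]
      have : (i : ℕ) ≠ (i : ℕ) + 1 := by omega
      simp [this]
    simp only [Matrix.add_apply, hJ, Matrix.one_apply_eq, add_zero, hudiag i] at h1
    have key : ∀ a : ZMod 2, (1 : ZMod 2) = 1 + a → a = 0 := by decide
    exact key _ h1
  -- e is strictly upper triangular hence zero
  have hestrict : ∀ i j : Fin n, (j : ℕ) ≤ (i : ℕ) →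
      (e : Matrix (Fin n) (Fin n) (ZMod 2)) i j = 0 := by
    intro i j hji
    rcases eq_or_lt_of_le hji with hj | hj
    · have hij : i = j := Fin.ext hj.symm
      subst hij; exact hediag i
    · exact e.2 (show (id : Fin n → Fin n) j < id i from hj)
  have hezero : (e : Matrix (Fin n) (Fin n) (ZMod 2)) = 0 := by
    have hn1 : n - 1 + 1 = n := Nat.sub_add_cancel (by omega)
    have hem : (e : Matrix (Fin n) (Fin n) (ZMod 2)) *
        (e : Matrix (Fin n) (Fin n) (ZMod 2)) = e := by exact_mod_cast he
    have h1 : (e : Matrix (Fin n) (Fin n) (ZMod 2)) =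
        (e : Matrix (Fin n) (Fin n) (ZMod 2)) ^ n := by
      have h2 := TC_idem_pow hem (n - 1)
      rw [hn1] at h2
      exact h2.symm
    rw [h1, TC_strict_pow_n hestrict]
  -- hence u = 1 + J
  have huval : (u : Matrix (Fin n) (Fin n) (ZMod 2)) = 1 + TC_J n := by
    have h1 := congrArg Subtype.val hre
    push_cast at h1
    rw [hezero, add_zero] at h1
    exact h1.symm
  -- contradiction via the (0, k0) entry of u^m
  have humval : (1 + TC_J n) ^ m = 1 := by
    rw [← huval]
    have h1 := congrArg Subtype.val hum
    push_cast at h1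
    exact h1
  have hn0 : 0 < n := by omega
  set j0 : Fin n := ⟨k0, hlt⟩ with hj0_def
  set i0 : Fin n := ⟨0, hn0⟩ with hi0_def
  have hentry := congrFun (congrFun humval i0) j0
  rw [TC_one_add_pow] at hentry
  rw [Matrix.sum_apply] at hentry
  have hsum : ∀ k ∈ Finset.range (m + 1),
      ((m.choose k : ZMod 2) • (TC_J n) ^ k) i0 j0 =
      if k = k0 then (m.choose k0 : ZMod 2) else 0 := by
    intro k _
    rw [Matrix.smul_apply, TC_J_pow]
    by_cases hk : k = k0
    · subst hk
      have h0 : ((j0 : ℕ) = (i0 : ℕ) + k0) := by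
        rw [hj0_def, hi0_def]
        show k0 = 0 + k0
        omega
      rw [if_pos h0, if_pos rfl, smul_eq_mul, mul_one]
    · have hne : ¬ ((j0 : ℕ) = (i0 : ℕ) + k) := by
        rw [hj0_def, hi0_def]
        show ¬ (k0 = 0 + k)
        omega
      rw [if_neg hne, smul_zero, if_neg hk]
  rw [Finset.sum_congr rfl hsum, Finset.sum_ite_eq' _ _ _,
    if_pos (Finset.mem_range.mpr (Nat.lt_succ_of_le hk0m))] at hentry
  have hone : (m.choose k0 : ZMod 2) = 1 := by
    obtain ⟨t, ht⟩ := hodd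
    rw [ht]
    push_cast
    rw [show (2 : ZMod 2) = 0 from rfl]
    ring
  have hzero : (1 : Matrix (Fin n) (Fin n) (ZMod 2)) i0 j0 = 0 := by
    apply Matrix.one_apply_ne
    intro hc
    have h2 : (0 : ℕ) = k0 := congrArg Fin.val hc
    omega
  rw [hone, hzero] at hentry
  exact one_ne_zero hentry

lemma TC_key (hm : 0 < m) :
    AlmostTorsionClean (Triangular n) m ↔ n ≤ k1 m :=
  ⟨fun h => TC_le_of_almost h hm, fun h => TC_almost_of_le h hm⟩

lemma TC_k1_le_self (hm : 0 < m) : k1 m ≤ m :=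
  Nat.sInf_le ⟨hm, le_refl m, by simp [Nat.choose_self]⟩

end Aux

theorem Tn_F2_m_torsion_clean_iff (n m : ℕ) (hn : 2 < n) (hm : 2 < m) :
    TorsionClean (Triangular n) m ↔
      (n ≤ k1 m ∧ ∀ u : ℕ, 2 < u → u ≤ m - 1 → k1 u < n) := by
  constructor
  · rintro ⟨h1, h2⟩
    refine ⟨(TC_key (by omega)).1 h1, fun u hu2 hum => ?_⟩
    have hnot := h2 u (by omega) (by omega)
    by_contra hle
    push_neg at hle
    exact hnot ((TC_key (by omega)).2 hle)
  · rintro ⟨h1, h2⟩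
    refine ⟨(TC_key (by omega)).2 h1, fun k hk0 hkm halmost => ?_⟩
    have hle := (TC_key hk0).1 halmost
    have hk1k := TC_k1_le_self hk0
    rcases le_or_gt k 2 with h | h
    · omega
    · have := h2 k h (by omega); omega
end

section
/- Let n > 2 and m > 2 be integers. If the ring 𝕋ₙ(𝔽₂) of n×n upper triangular matrices over 𝔽₂ is m-torsion clean, then m ≥ n. -/
open Polynomial in
lemma choose_two_pow_odd (s m : ℕ) (h1 : 2^s ≤ m) (h2 : m < 2^(s+1)) :
    (m.choose (2^s) : ZMod 2) = 1 := by
  set r := m - 2^s with hr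
  have hm : m = 2^s + r := by omega
  have hrlt : r < 2^s := by
    have := pow_succ 2 s
    omega
  have key : (((X : (ZMod 2)[X]) + 1) ^ m).coeff (2^s) = (m.choose (2^s) : ZMod 2) :=
    coeff_X_add_one_pow _ m _
  rw [hm, pow_add, add_pow_char_pow, one_pow] at key
  rw [hm, ← key]
  have : ((X : (ZMod 2)[X])^(2^s) + 1) * (X+1)^r = (X+1)^r * X^(2^s) + (X+1)^r := by ring
  rw [this, Polynomial.coeff_add, Polynomial.coeff_mul_X_pow', if_pos le_rfl, Nat.sub_self,
    coeff_X_add_one_pow, coeff_X_add_one_pow,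
    Nat.choose_zero_right, Nat.choose_eq_zero_of_lt (by omega)]
  simp

def ShiftM (n : ℕ) : Matrix (Fin n) (Fin n) (ZMod 2) :=
  Matrix.of fun i j => if (i : ℕ) + 1 = (j : ℕ) then 1 else 0

lemma shift_pow (n k : ℕ) (i j : Fin n) :
    ((ShiftM n) ^ k) i j = if (i : ℕ) + k = (j : ℕ) then 1 else 0 := by
  induction k generalizing i with
  | zero =>
    simp [Matrix.one_apply, Fin.ext_iff]
  | succ k ih =>
    rw [pow_succ', Matrix.mul_apply]
    by_cases hi : (i : ℕ) + 1 < n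
    · rw [Finset.sum_eq_single (⟨(i:ℕ)+1, hi⟩ : Fin n)]
      · rw [ih]
        simp only [ShiftM, Matrix.of_apply]
        simp only [if_true, one_mul]
        exact if_congr (by omega) rfl rfl
      · intro b _ hb
        simp only [ShiftM, Matrix.of_apply]
        rw [if_neg, zero_mul]
        intro hc
        exact hb (by ext; simp [← hc])
      · intro hmem; exact absurd (Finset.mem_univ _) hmem
    · rw [Finset.sum_eq_zero, if_neg (by omega)]
      intro b _
      simp only [ShiftM, Matrix.of_apply]
      rw [if_neg (by omega), zero_mul]

lemma strict_idem_zero {n : ℕ} (M : Matrix (Fin n) (Fin n) (ZMod 2))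
    (htri : ∀ i j : Fin n, (j : ℕ) ≤ (i : ℕ) → M i j = 0) (hMM : M * M = M) :
    M = 0 := by
  suffices H : ∀ d : ℕ, ∀ i j : Fin n, (j : ℕ) - (i : ℕ) ≤ d → M i j = 0 by
    ext i j
    exact H ((j : ℕ) - i) i j le_rfl
  intro d
  induction d with
  | zero => intro i j hd; exact htri i j (by omega)
  | succ d ih =>
    intro i j hd
    by_cases hji : (j : ℕ) ≤ (i : ℕ)
    · exact htri i j hji
    · rw [← hMM, Matrix.mul_apply]
      apply Finset.sum_eq_zero
      intro k _
      by_cases hk1 : (k : ℕ) ≤ (i : ℕ)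
      · rw [htri i k hk1, zero_mul]
      · by_cases hk2 : (j : ℕ) ≤ (k : ℕ)
        · rw [htri k j hk2, mul_zero]
        · rw [ih i k (by omega), zero_mul]

theorem n_le_m_of_Tn_F2_m_torsion_clean (n m : ℕ) (hn : 2 < n) (hm : 2 < m)
    (h : TorsionClean (Triangular n) m) : n ≤ m := by
  by_contra hnm
  push_neg at hnm
  have hm0 : m ≠ 0 := by omega
  set s := Nat.log 2 m with hs
  have hs1 : 2 ^ s ≤ m := Nat.pow_log_le_self 2 hm0
  have hs2 : m < 2 ^ (s + 1) := Nat.lt_pow_succ_log_self (by norm_num) m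
  have hs0 : 1 ≤ 2 ^ s := Nat.one_le_two_pow
  have hNmem : ShiftM n ∈ Triangular n := by
    intro i j hji
    simp only [ShiftM, Matrix.of_apply, id] at *
    rw [if_neg (by omega)]
  obtain ⟨u, e, hu, hum, hee, hr⟩ := h.1 ⟨ShiftM n, hNmem⟩
  obtain ⟨w, hw⟩ := hu
  set U := (u : Matrix (Fin n) (Fin n) (ZMod 2)) with hUdef
  set V := ((↑(w⁻¹) : Triangular n) : Matrix (Fin n) (Fin n) (ZMod 2)) with hVdef
  have hUV : U * V = 1 := by
    have h1 := congrArg (Subtype.val : Triangular n → _) w.mul_inv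
    simpa [hw] using h1
  have hUtri : U.BlockTriangular id := u.2
  have hVtri : V.BlockTriangular id := (↑(w⁻¹) : Triangular n).2
  have hUdiag : ∀ i : Fin n, U i i = 1 := by
    intro i
    have h1 : (U * V) i i = 1 := by rw [hUV]; simp [Matrix.one_apply]
    rw [Matrix.mul_apply, Finset.sum_eq_single i] at h1
    · revert h1
      generalize U i i = a
      generalize V i i = b
      revert a b; decide
    · intro b _ hb
      rcases lt_or_gt_of_ne hb with hlt | hgt
      · rw [hUtri (show id b < id i from hlt), zero_mul]
      · rw [hVtri (show id i < id b from hgt), mul_zero]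
    · intro hmem; exact absurd (Finset.mem_univ _) hmem
  set E := (e : Matrix (Fin n) (Fin n) (ZMod 2)) with hEdef
  have hEtri : E.BlockTriangular id := e.2
  have hNE : ShiftM n = U + E := congrArg Subtype.val hr
  have hEE : E * E = E := congrArg Subtype.val hee
  have negeq : ∀ A : Matrix (Fin n) (Fin n) (ZMod 2), -A = A := by
    intro A; ext i j; rw [Matrix.neg_apply, CharTwo.neg_eq]
  have hEdiag : ∀ i : Fin n, E i i = 1 := by
    intro i
    have h1 : ShiftM n i i = U i i + E i i := by rw [hNE]; rfl
    rw [hUdiag i] at h1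
    simp only [ShiftM, Matrix.of_apply, if_neg (by omega : ¬ ((i:ℕ) + 1 = i))] at h1
    revert h1
    generalize E i i = a
    revert a; decide
  have hE1 : E = 1 := by
    have hMtri : ∀ i j : Fin n, (j:ℕ) ≤ (i:ℕ) → (E - 1) i j = 0 := by
      intro i j hji
      rcases eq_or_lt_of_le hji with heq | hlt
      · have : j = i := Fin.ext heq
        subst this
        rw [Matrix.sub_apply, hEdiag, Matrix.one_apply_eq, sub_self]
      · have hne : i ≠ j := by intro hc; subst hc; omega
        rw [Matrix.sub_apply, hEtri (show id j < id i from hlt),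
          Matrix.one_apply_ne hne, sub_self]
    have hMM : (E - 1) * (E - 1) = E - 1 := by
      have expand : (E - 1) * (E - 1) = E * E - E - E + 1 := by noncomm_ring
      rw [expand, hEE]
      calc E - E - E + 1 = -(E - 1) := by abel
        _ = E - 1 := negeq _
    have := strict_idem_zero (E - 1) hMtri hMM
    rw [sub_eq_zero] at this
    exact this
  have h11 : (1 : Matrix (Fin n) (Fin n) (ZMod 2)) + 1 = 0 := by
    ext i j
    rw [Matrix.add_apply, CharTwo.add_self_eq_zero, Matrix.zero_apply]
  have hUeq : U = ShiftM n + 1 := by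
    rw [hNE, hE1, add_assoc, h11, add_zero]
  have hUm : (ShiftM n + 1) ^ m = 1 := by
    rw [← hUeq]
    have := congrArg (Subtype.val : Triangular n → _) hum
    simpa using this
  -- expand via binomial
  have hbin := (Commute.one_right (ShiftM n)).add_pow m
  rw [hbin] at hUm
  set i0 : Fin n := ⟨0, by omega⟩
  set j0 : Fin n := ⟨2 ^ s, by omega⟩
  have hent := congrFun (congrFun hUm i0) j0
  rw [Matrix.sum_apply] at hent
  have hterm : ∀ k ∈ Finset.range (m + 1),
      (ShiftM n ^ k * 1 ^ (m - k) * ((m.choose k : ℕ) : Matrix (Fin n) (Fin n) (ZMod 2))) i0 j0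
        = if k = 2 ^ s then ((m.choose k : ℕ) : ZMod 2) else 0 := by
    intro k _
    rw [one_pow, mul_one, ← Matrix.diagonal_natCast, Matrix.mul_diagonal, shift_pow]
    have hi0 : (i0:ℕ) = 0 := rfl
    have hj0 : (j0:ℕ) = 2 ^ s := rfl
    by_cases hk : k = 2 ^ s
    · rw [if_pos (by omega), if_pos hk, one_mul]
    · rw [if_neg (by omega), if_neg hk, zero_mul]
  rw [Finset.sum_congr rfl hterm, Finset.sum_ite_eq' (Finset.range (m+1)) (2^s),
    if_pos (Finset.mem_range.mpr (by omega))] at hent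
  have hone : (1 : Matrix (Fin n) (Fin n) (ZMod 2)) i0 j0 = 0 := by
    apply Matrix.one_apply_ne
    intro hc
    have : (0:ℕ) = 2 ^ s := congrArg Fin.val hc
    omega
  rw [hone] at hent
  have := choose_two_pow_odd s m hs1 hs2
  rw [hent] at this
  exact absurd this.symm one_ne_zero
end

section
/- Let n > 2 be an integer. Then the ring 𝕋ₙ(𝔽₂) of n×n upper triangular matrices over 𝔽₂ is n-torsion clean if and only if n = 2ˡ for some integer l ≥ 2. -/
variable {n : ℕ}

lemma tri_apply (x : Triangular n) {i j : Fin n} (h : (j : ℕ) < (i : ℕ)) :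
    (x : Matrix (Fin n) (Fin n) (ZMod 2)) i j = 0 :=
  x.2 (show (id j : Fin n) < id i from h)

lemma coe_pow (x : Triangular n) (k : ℕ) :
    ((x ^ k : Triangular n) : Matrix (Fin n) (Fin n) (ZMod 2)) = (x : _) ^ k := by
  induction k with
  | zero => rfl
  | succ k ih => rw [pow_succ, pow_succ, ← ih]; rfl

lemma unit_diag_one (u : Triangular n) (hu : IsUnit u) (i : Fin n) :
    (u : Matrix (Fin n) (Fin n) (ZMod 2)) i i = 1 := by
  obtain ⟨v, hv⟩ := hu.exists_right_inv
  have hm : (u : Matrix (Fin n) (Fin n) (ZMod 2)) * v = 1 := congrArg Subtype.val hv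
  have hdet : (u : Matrix (Fin n) (Fin n) (ZMod 2)).det * ((v : Triangular n) : Matrix (Fin n) (Fin n) (ZMod 2)).det = 1 := by
    rw [← Matrix.det_mul, hm, Matrix.det_one]
  have h1 : (u : Matrix (Fin n) (Fin n) (ZMod 2)).det = ∏ k : Fin n, (u : Matrix (Fin n) (Fin n) (ZMod 2)) k k :=
    Matrix.det_of_upperTriangular u.2
  by_contra hne
  have hz : (u : Matrix (Fin n) (Fin n) (ZMod 2)) i i = 0 := by
    revert hne; generalize (u : Matrix (Fin n) (Fin n) (ZMod 2)) i i = a; revert a; decide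
  have hp : ∏ k : Fin n, (u : Matrix (Fin n) (Fin n) (ZMod 2)) k k = 0 :=
    Finset.prod_eq_zero (f := fun k => (u : Matrix (Fin n) (Fin n) (ZMod 2)) k k)
      (Finset.mem_univ i) hz
  rw [h1, hp, zero_mul] at hdet
  exact zero_ne_one hdet


lemma strict_pow_zero (N : Matrix (Fin n) (Fin n) (ZMod 2))
    (hN : ∀ i j : Fin n, (j : ℕ) ≤ i → N i j = 0) :
    ∀ (k : ℕ) (i j : Fin n), (j : ℕ) < (i : ℕ) + k → (N ^ k) i j = 0 := by
  intro k
  induction k with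
  | zero =>
    intro i j h
    simp only [add_zero] at h
    rw [pow_zero, Matrix.one_apply_ne]
    exact fun he => absurd (congrArg Fin.val he) (by omega)
  | succ k ih =>
    intro i j h
    rw [pow_succ, Matrix.mul_apply]
    apply Finset.sum_eq_zero
    intro m _
    rcases lt_or_ge (m : ℕ) ((i : ℕ) + k) with hm | hm
    · rw [ih i m hm, zero_mul]
    · rw [hN m j (by omega), mul_zero]

lemma strict_nilpotent (N : Matrix (Fin n) (Fin n) (ZMod 2))
    (hN : ∀ i j : Fin n, (j : ℕ) ≤ i → N i j = 0) : N ^ n = 0 := by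
  ext i j
  rw [strict_pow_zero N hN n i j (by omega)]
  rfl

/-- the shift matrix -/
def Jmat (n : ℕ) : Matrix (Fin n) (Fin n) (ZMod 2) :=
  Matrix.of fun i j => if (i : ℕ) + 1 = (j : ℕ) then 1 else 0

lemma Jmat_pow (t : ℕ) (i j : Fin n) :
    ((Jmat n) ^ t) i j = if (i : ℕ) + t = (j : ℕ) then 1 else 0 := by
  induction t generalizing j with
  | zero =>
    rw [pow_zero, Matrix.one_apply]
    congr 1
    simp [Fin.ext_iff]
  | succ t ih =>
    rw [pow_succ, Matrix.mul_apply]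
    rcases lt_or_ge ((i : ℕ) + t) n with hlt | hge
    · have : ∀ m : Fin n, ((Jmat n) ^ t) i m * (Jmat n) m j
          = if m = ⟨(i : ℕ) + t, hlt⟩ then (Jmat n) m j else 0 := by
        intro m
        rw [ih]
        by_cases hm : m = ⟨(i : ℕ) + t, hlt⟩
        · simp [hm]
        · rw [if_neg hm, if_neg, zero_mul]
          exact fun he => hm (Fin.ext he.symm)
      simp only [this]
      rw [Finset.sum_ite_eq' Finset.univ]
      simp only [Finset.mem_univ, if_true]
      show (if ((i : ℕ) + t) + 1 = (j : ℕ) then (1:ZMod 2) else 0) = _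
      congr 1
    · rw [Finset.sum_eq_zero, eq_comm, if_neg (by omega)]
      intro m _
      rw [ih, if_neg (by omega), zero_mul]

lemma diag_one_pow (hn : 2 < n) (x : Triangular n)
    (hx : ∀ i : Fin n, (x : Matrix (Fin n) (Fin n) (ZMod 2)) i i = 1)
    {k : ℕ} (hk : n ≤ 2 ^ k) : x ^ (2 ^ k) = 1 := by
  haveI : Nonempty (Fin n) := ⟨⟨0, by omega⟩⟩
  set N : Triangular n := x - 1 with hN
  have hNmat : ∀ i j : Fin n, (j : ℕ) ≤ (i : ℕ) →
      (N : Matrix (Fin n) (Fin n) (ZMod 2)) i j = 0 := by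
    intro i j h
    have : (N : Matrix (Fin n) (Fin n) (ZMod 2)) i j
        = (x : Matrix (Fin n) (Fin n) (ZMod 2)) i j - (1 : Matrix (Fin n) (Fin n) (ZMod 2)) i j :=
      rfl
    rw [this]
    rcases eq_or_lt_of_le h with he | hlt
    · have hij : i = j := Fin.ext he.symm
      rw [hij, hx j, Matrix.one_apply_eq, sub_self]
    · rw [tri_apply x hlt, Matrix.one_apply_ne (fun hij => by
        exact absurd (congrArg Fin.val hij) (by omega)), sub_zero]
  have hNn : (N : Matrix (Fin n) (Fin n) (ZMod 2)) ^ n = 0 := strict_nilpotent _ hNmat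
  have hNpow : N ^ (2 ^ k) = 0 := by
    apply Subtype.ext
    rw [coe_pow]
    show (N : Matrix (Fin n) (Fin n) (ZMod 2)) ^ (2 ^ k) = (0 : Triangular n)
    obtain ⟨d, hd⟩ := Nat.exists_eq_add_of_le hk
    rw [hd, pow_add, hNn, zero_mul]
    rfl
  have hx1 : x = 1 + N := by rw [hN]; abel
  have hchar : (1 + N) ^ (2 ^ k) = 1 + N ^ (2 ^ k) := by
    simpa using add_pow_char_pow_of_commute (R := Triangular n) (p := 2) (n := k) (x := 1) (y := N)
      (Commute.one_left N)
  rw [hx1, hchar, hNpow, add_zero]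

lemma diag_one_isUnit (hn : 2 < n) (x : Triangular n)
    (hx : ∀ i : Fin n, (x : Matrix (Fin n) (Fin n) (ZMod 2)) i i = 1) : IsUnit x := by
  have h := diag_one_pow hn x hx (k := n) (Nat.le_of_lt (Nat.lt_two_pow_self (n := n)))
  have h2 : 0 < 2 ^ n := by positivity
  have hxp : x * x ^ (2 ^ n - 1) = 1 := by
    have : x ^ (1 + (2 ^ n - 1)) = x * x ^ (2 ^ n - 1) := by rw [pow_add, pow_one]
    rw [← this, show 1 + (2 ^ n - 1) = 2 ^ n by omega]; exact h
  have hpx : x ^ (2 ^ n - 1) * x = 1 := by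
    have : x ^ (2 ^ n - 1 + 1) = x ^ (2 ^ n - 1) * x := by rw [pow_add, pow_one]
    rw [← this, show 2 ^ n - 1 + 1 = 2 ^ n by omega]; exact h
  exact ⟨⟨x, x ^ (2 ^ n - 1), hxp, hpx⟩, rfl⟩

lemma unit_pow_eq_one (hn : 2 < n) (u : Triangular n) (hu : IsUnit u)
    {k : ℕ} (hk : n ≤ 2 ^ k) : u ^ (2 ^ k) = 1 :=
  diag_one_pow hn u (unit_diag_one u hu) hk

lemma zmod2_ne_zero {a : ZMod 2} (h : a ≠ 0) : a = 1 := by revert h; revert a; decide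

lemma odd_cast_one {q : ℕ} (hq : ¬ 2 ∣ q) : (q : ZMod 2) = 1 := by
  apply zmod2_ne_zero
  rw [Ne, ZMod.natCast_eq_zero_iff]
  exact hq

lemma Jmat_mem : Jmat n ∈ Triangular n := by
  intro i j h
  have h' : (j : ℕ) < (i : ℕ) := h
  show (if (i : ℕ) + 1 = (j : ℕ) then (1 : ZMod 2) else 0) = 0
  rw [if_neg (by omega)]

lemma almost_iff (hn : 2 < n) (m : ℕ) (hm : 0 < m) :
    AlmostTorsionClean (Triangular n) m ↔ n ≤ 2 ^ (m.factorization 2) := by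
  haveI : Nonempty (Fin n) := ⟨⟨0, by omega⟩⟩
  set a := m.factorization 2 with ha
  constructor
  · intro h
    by_contra hlt
    push_neg at hlt
    -- consider the shift matrix
    obtain ⟨u, e, hu, hum, hee, hre⟩ := h ⟨Jmat n, Jmat_mem⟩
    -- e has diagonal 1
    have hudiag := unit_diag_one u hu
    have hediag : ∀ i : Fin n, (e : Matrix (Fin n) (Fin n) (ZMod 2)) i i = 1 := by
      intro i
      have : (e : Matrix (Fin n) (Fin n) (ZMod 2)) i i
          = Jmat n i i - (u : Matrix (Fin n) (Fin n) (ZMod 2)) i i := by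
        have he' : e = (⟨Jmat n, Jmat_mem⟩ : Triangular n) - u := by rw [hre]; abel
        rw [he']; rfl
      rw [this, hudiag]
      show (if (i : ℕ) + 1 = (i : ℕ) then (1 : ZMod 2) else 0) - 1 = 1
      rw [if_neg (by omega)]
      decide
    have heu : IsUnit e := diag_one_isUnit hn e hediag
    have he1 : e = 1 := by
      have : e * e = e * 1 := by rw [hee, mul_one]
      exact heu.mul_left_cancel this
    -- now u = J - 1 and u^m = 1
    have humat : (u : Matrix (Fin n) (Fin n) (ZMod 2)) = Jmat n - 1 := by
      have : u = (⟨Jmat n, Jmat_mem⟩ : Triangular n) - 1 := by rw [hre, he1]; abel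
      rw [this]; rfl
    have hpowm : (Jmat n - 1) ^ m = (1 : Matrix (Fin n) (Fin n) (ZMod 2)) := by
      rw [← humat, ← coe_pow, hum]; rfl
    have hsub : Jmat n - 1 = 1 + Jmat n := by
      ext i j
      show Jmat n i j - (1 : Matrix (Fin n) (Fin n) (ZMod 2)) i j
        = (1 : Matrix (Fin n) (Fin n) (ZMod 2)) i j + Jmat n i j
      have : ∀ x y : ZMod 2, x - y = y + x := by decide
      apply this
    rw [hsub] at hpowm
    -- decompose m = 2^a * q with q odd
    set q := ordCompl[2] m with hq
    have hmq : 2 ^ a * q = m := Nat.ordProj_mul_ordCompl_eq_self m 2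
    have hqodd : ¬ 2 ∣ q := Nat.not_dvd_ordCompl Nat.prime_two hm.ne'
    have hqpos : 0 < q := Nat.ordCompl_pos 2 hm.ne'
    set M : Matrix (Fin n) (Fin n) (ZMod 2) := Jmat n ^ (2 ^ a) with hM
    have hchar : (1 + Jmat n) ^ (2 ^ a) = 1 + M := by
      simpa using add_pow_char_pow_of_commute (R := Matrix (Fin n) (Fin n) (ZMod 2))
        (p := 2) (n := a) (x := 1) (y := Jmat n) (Commute.one_left _)
    have hMq : (M + 1) ^ q = 1 := by
      rw [add_comm, ← hchar, ← pow_mul, hmq, hpowm]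
    -- evaluate entry (0, 2^a)
    have h2a : 0 < 2 ^ a := by positivity
    set i0 : Fin n := ⟨0, by omega⟩ with hi0
    set j0 : Fin n := ⟨2 ^ a, hlt⟩ with hj0
    have hrhs : ((M + 1) ^ q) i0 j0 = (q : ZMod 2) := by
      rw [(Commute.one_right M).add_pow q]
      rw [Matrix.sum_apply]
      have hterm : ∀ k ∈ Finset.range (q + 1),
          (M ^ k * (1 : Matrix (Fin n) (Fin n) (ZMod 2)) ^ (q - k)
            * ((q.choose k : ℕ) : Matrix (Fin n) (Fin n) (ZMod 2))) i0 j0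
          = if k = 1 then ((q.choose k : ℕ) : ZMod 2) else 0 := by
        intro k _
        have hMk : M ^ k = Jmat n ^ (2 ^ a * k) := by rw [hM, ← pow_mul]
        have hcast : (M ^ k * (1 : Matrix (Fin n) (Fin n) (ZMod 2)) ^ (q - k)
            * ((q.choose k : ℕ) : Matrix (Fin n) (Fin n) (ZMod 2)))
            = (q.choose k) • (M ^ k) := by
          rw [one_pow, mul_one, (Nat.cast_commute (q.choose k) (M ^ k)).symm.eq,
            ← nsmul_eq_mul]
        rw [hcast, Matrix.smul_apply, hMk, Jmat_pow]
        show (q.choose k) • (if (0 : ℕ) + 2 ^ a * k = 2 ^ a then (1 : ZMod 2) else 0) = _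
        by_cases hk : k = 1
        · subst hk
          rw [if_pos (by omega)]
          simp [nsmul_eq_mul]
        · rw [if_neg (fun hc => hk (by
            have : 2 ^ a * k = 2 ^ a * 1 := by omega
            exact Nat.eq_of_mul_eq_mul_left h2a this)), if_neg hk, smul_zero]
      rw [Finset.sum_congr rfl hterm, Finset.sum_ite_eq' (Finset.range (q + 1)) 1
        (fun k => ((q.choose k : ℕ) : ZMod 2))]
      rw [if_pos (Finset.mem_range.mpr (by omega)), Nat.choose_one_right]
    rw [hMq] at hrhs
    have hlhs : (1 : Matrix (Fin n) (Fin n) (ZMod 2)) i0 j0 = 0 := by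
      apply Matrix.one_apply_ne
      intro hc
      have := congrArg Fin.val hc
      simp [hi0, hj0] at this
      omega
    rw [hlhs, odd_cast_one hqodd] at hrhs
    exact zero_ne_one hrhs
  · intro hle r
    set E : Matrix (Fin n) (Fin n) (ZMod 2) :=
      Matrix.diagonal (fun i => 1 + (r : Matrix (Fin n) (Fin n) (ZMod 2)) i i) with hE
    have hEmem : E ∈ Triangular n := Matrix.blockTriangular_diagonal _
    set e : Triangular n := ⟨E, hEmem⟩ with he
    set u : Triangular n := r - e with hudef
    have hudiag : ∀ i : Fin n, (u : Matrix (Fin n) (Fin n) (ZMod 2)) i i = 1 := by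
      intro i
      show (r : Matrix (Fin n) (Fin n) (ZMod 2)) i i - E i i = 1
      rw [hE, Matrix.diagonal_apply_eq]
      have : ∀ x : ZMod 2, x - (1 + x) = 1 := by decide
      apply this
    have hu : IsUnit u := diag_one_isUnit hn u hudiag
    have hum : u ^ m = 1 := by
      have h2 : u ^ (2 ^ a) = 1 := diag_one_pow hn u hudiag hle
      have hmq : 2 ^ a * ordCompl[2] m = m := Nat.ordProj_mul_ordCompl_eq_self m 2
      rw [← hmq, pow_mul, h2, one_pow]
    refine ⟨u, e, hu, hum, ?_, by rw [hudef]; abel⟩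
    apply Subtype.ext
    show E * E = E
    rw [hE, Matrix.diagonal_mul_diagonal]
    exact congrArg Matrix.diagonal (funext fun i => by
      have h : ∀ x : ZMod 2, x * x = x := by decide
      apply h)

theorem Tn_F2_n_torsion_clean_iff (n : ℕ) (hn : 2 < n) :
    TorsionClean (Triangular n) n ↔ ∃ l : ℕ, 2 ≤ l ∧ n = 2 ^ l := by
  constructor
  · rintro ⟨h1, _⟩
    have hle := (almost_iff hn n (by omega)).mp h1
    have hdvd : 2 ^ (n.factorization 2) ∣ n := Nat.ordProj_dvd n 2
    have hle' : 2 ^ (n.factorization 2) ≤ n := Nat.le_of_dvd (by omega) hdvd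
    refine ⟨n.factorization 2, ?_, by omega⟩
    by_contra hl
    push_neg at hl
    have h2 : 2 ^ (n.factorization 2) ≤ 2 ^ 1 :=
      Nat.pow_le_pow_right (by omega) (by omega)
    omega
  · rintro ⟨l, hl2, rfl⟩
    have hfac : ((2 : ℕ) ^ l).factorization 2 = l := by
      rw [Nat.Prime.factorization_pow Nat.prime_two]
      simp
    constructor
    · exact (almost_iff hn _ (by positivity)).mpr (by rw [hfac])
    · intro k hk hkn hak
      have hle := (almost_iff hn k hk).mp hak
      have h2 : 2 ^ (k.factorization 2) ≤ k := Nat.ordProj_le 2 hk.ne'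
      omega
end
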